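/- With H and X as above and aₙ defined as in the recursive quantum Markov chain, the limiting output state on input |0⟩⟨0| is (1/3)·I: lim aₙ(|0⟩⟨0|) = (1/3)|+⟩⟨+| + (1/3)|−⟩⟨−| = (1/3)·I₂, where |±⟩ = (|0⟩ ± |1⟩)/√2. -/

import Mathlib

open Matrix BigOperators ComplexOrder Filter

/-- In the recursive quantum Markov chain, on input `|0⟩⟨0|` the limiting
output state is `(1/3)·I`: `lim aₙ(|0⟩⟨0|) = (1/3)|+⟩⟨+| + (1/3)|−⟩⟨−| = (1/3)I₂`,
including the identities `H|0⟩⟨0|H = |+⟩⟨+|`, `HX|0⟩⟨0|XH = |−⟩⟨−|` and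
`|+⟩⟨+| + |−⟩⟨−| = I`. -/
theorem rqmc_output_on_ket0
    (H X : Matrix (Fin 2) (Fin 2) ℂ)
    (hH : H = ((Real.sqrt 2 : ℝ) : ℂ)⁻¹ • !![1, 1; 1, -1])
    (hX : X = !![0, 1; 1, 0])
    (a b : ℕ → Matrix (Fin 2) (Fin 2) ℂ → Matrix (Fin 2) (Fin 2) ℂ)
    (ha0 : a 0 = fun _ => 0) (hb0 : b 0 = fun _ => 0)
    (haS : ∀ n ρ, a (n + 1) ρ = (1/4 : ℂ) • (H * ρ * H) + (1/2 : ℂ) • b n ρ)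
    (hbS : ∀ n ρ, b (n + 1) ρ = (1/2 : ℂ) • a n ρ + (1/2 : ℂ) • (H * X * ρ * X * H))
    (e00 : Matrix (Fin 2) (Fin 2) ℂ) (he00 : e00 = !![1, 0; 0, 0])
    (plus minus : Fin 2 → ℂ)
    (hplus : plus = fun _ => ((Real.sqrt 2 : ℝ) : ℂ)⁻¹)
    (hminus : minus = ![((Real.sqrt 2 : ℝ) : ℂ)⁻¹, -((Real.sqrt 2 : ℝ) : ℂ)⁻¹]) :
    H * e00 * H = vecMulVec plus (star plus) ∧
    H * X * e00 * X * H = vecMulVec minus (star minus) ∧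
    vecMulVec plus (star plus) + vecMulVec minus (star minus) = 1 ∧
    Tendsto (fun n => a n e00) atTop
      (nhds ((1/3 : ℂ) • vecMulVec plus (star plus)
             + (1/3 : ℂ) • vecMulVec minus (star minus))) := by
  set r : ℂ := ((Real.sqrt 2 : ℝ) : ℂ)⁻¹ with hrdef
  have hsr : star r = r := by
    rw [hrdef, ← Complex.ofReal_inv]
    exact Complex.conj_ofReal _
  have hr : r * r = 1/2 := by
    rw [hrdef, ← mul_inv, ← Complex.ofReal_mul, Real.mul_self_sqrt (by norm_num)]
    norm_num
  -- the three matrix identities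
  have hP : H * e00 * H = vecMulVec plus (star plus) := by
    subst hH he00 hplus
    ext i j
    fin_cases i <;> fin_cases j <;>
      simp [Matrix.mul_apply, Fin.sum_univ_two, vecMulVec_apply, hsr] <;> ring_nf <;>
      rw [show r^2 = r*r by ring, hr]
  have hM : H * X * e00 * X * H = vecMulVec minus (star minus) := by
    subst hH hX he00 hminus
    ext i j
    fin_cases i <;> fin_cases j <;>
      simp [Matrix.mul_apply, Fin.sum_univ_two, vecMulVec_apply, hsr] <;> ring_nf <;>
      simp [show r^2 = r*r by ring, hr]
  have hI : vecMulVec plus (star plus) + vecMulVec minus (star minus) = 1 := by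
    subst hplus hminus
    ext i j
    fin_cases i <;> fin_cases j <;>
      simp [vecMulVec_apply, hsr, Matrix.one_apply, -cons_vecMulVec] <;> ring_nf <;>
      simp [show r^2 = r*r by ring, hr] <;> norm_num
  refine ⟨hP, hM, hI, ?_⟩
  set P := H * e00 * H with hPdef
  set M := H * X * e00 * X * H with hMdef
  -- closed form for a n e00 and b n e00
  have key : ∀ n : ℕ,
      a n e00 = ((1/3 : ℂ) * (1 - (1/4 : ℂ)^((n+1)/2))) • P
              + ((1/3 : ℂ) * (1 - (1/4 : ℂ)^(n/2))) • M ∧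
      b n e00 = ((1/6 : ℂ) * (1 - (1/4 : ℂ)^(n/2))) • P
              + (if n = 0 then 0 else (2/3 : ℂ) - (1/6 : ℂ) * (1/4 : ℂ)^((n-1)/2)) • M := by
    intro n
    induction n with
    | zero =>
        constructor
        · rw [ha0]; norm_num
        · rw [hb0]; norm_num
    | succ n ih =>
        obtain ⟨iha, ihb⟩ := ih
        constructor
        · rw [haS, ihb]
          rcases Nat.eq_zero_or_pos n with hn | hn
          · subst hn; norm_num; rfl
          · obtain ⟨m, rfl⟩ : ∃ m, n = m + 1 := ⟨n - 1, by omega⟩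
            rw [if_neg (by omega)]
            have e1 : (m + 1 + 1 + 1) / 2 = (m + 1) / 2 + 1 := by omega
            have e2 : (m + 1 + 1) / 2 = m / 2 + 1 := by omega
            have e3 : m + 1 - 1 = m := by omega
            rw [e1, e2, e3]
            match_scalars <;> ring
        · rw [hbS, iha]
          rw [if_neg (by omega)]
          have e1 : n + 1 - 1 = n := by omega
          rw [e1]
          match_scalars <;> ring
  -- the limit
  have hpow : Tendsto (fun k : ℕ => (1/4 : ℂ)^k) atTop (nhds 0) :=
    tendsto_pow_atTop_nhds_zero_of_norm_lt_one (by norm_num)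
  have harg1 : Tendsto (fun n : ℕ => (n+1)/2) atTop atTop :=
    tendsto_atTop_atTop.2 fun c => ⟨2*c, fun n hn => by omega⟩
  have harg2 : Tendsto (fun n : ℕ => n/2) atTop atTop :=
    tendsto_atTop_atTop.2 fun c => ⟨2*c, fun n hn => by omega⟩
  have hx : Tendsto (fun n : ℕ => (1/3 : ℂ) * (1 - (1/4 : ℂ)^((n+1)/2))) atTop
      (nhds (1/3 : ℂ)) := by
    have := (((tendsto_const_nhds : Tendsto (fun _ : ℕ => (1:ℂ)) atTop (nhds 1)).sub
      (hpow.comp harg1)).const_mul (1/3 : ℂ))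
    simpa using this
  have hy : Tendsto (fun n : ℕ => (1/3 : ℂ) * (1 - (1/4 : ℂ)^(n/2))) atTop
      (nhds (1/3 : ℂ)) := by
    have := (((tendsto_const_nhds : Tendsto (fun _ : ℕ => (1:ℂ)) atTop (nhds 1)).sub
      (hpow.comp harg2)).const_mul (1/3 : ℂ))
    simpa using this
  have hlim := (hx.smul_const P).add (hy.smul_const M)
  rw [← hP, ← hM]
  refine Tendsto.congr (fun n => ?_) hlim
  exact (key n).1.symm
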